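/- For any finite graph H without isolated vertices and any odd integer k ≥ 5, hom(C_k, H)^{1/k} ≤ hom(C_{k-1}, H)^{1/(k-1)}. -/

import Mathlib

open Finset

/-- Number of graph homomorphisms from the (loopless or looped) graph given by
relation `G` on `U` to the graph given by relation `H` on `V`. -/
def HomCount {U V : Type*} [Fintype U] [DecidableEq U] [Fintype V] [DecidableEq V]
    (G : U → U → Prop) [DecidableRel G] (H : V → V → Prop) [DecidableRel H] : ℕ :=
  Fintype.card {f : U → V // ∀ a b, G a b → H (f a) (f b)}

/-- Degree of a vertex in a graph with loops (a loop counts once). -/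
def hdeg {V : Type*} [Fintype V] (H : V → V → Prop) [DecidableRel H] (v : V) : ℕ :=
  (Finset.univ.filter (H v)).card

/-- Adjacency matrix (over ℝ) of the graph with loops given by `H`. -/
def adjMat {V : Type*} [Fintype V] (H : V → V → Prop) [DecidableRel H] : Matrix V V ℝ :=
  fun i j => if H i j then 1 else 0

/-- Adjacency relation of the cycle `C_k` on vertex set `Fin k` (for `k ≥ 3`). -/
def cycAdj (k : ℕ) (i j : Fin k) : Prop :=
  (i.val + 1) % k = j.val ∨ (j.val + 1) % k = i.val

instance (k : ℕ) : DecidableRel (cycAdj k) := fun i j => by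
  unfold cycAdj; infer_instance

/-- Adjacency relation of the path `P_k` on vertex set `Fin k`. -/
def pathAdj (k : ℕ) (i j : Fin k) : Prop :=
  i.val + 1 = j.val ∨ j.val + 1 = i.val

instance (k : ℕ) : DecidableRel (pathAdj k) := fun i j => by
  unfold pathAdj; infer_instance

/-- Adjacency relation of the star `K_{1,x-1}` on `Fin x`, with center `0`. -/
def starAdj (x : ℕ) (i j : Fin x) : Prop :=
  (i.val = 0 ∧ j.val ≠ 0) ∨ (j.val = 0 ∧ i.val ≠ 0)

instance (x : ℕ) : DecidableRel (starAdj x) := fun i j => by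
  unfold starAdj; infer_instance

section Aux

open Matrix

variable {V : Type*} [Fintype V] [DecidableEq V]

set_option linter.unusedSectionVars false

lemma pow_apply_walks (A : Matrix V V ℝ) (n : ℕ) (i j : V) :
    (A ^ n) i j = ∑ f : Fin (n+1) → V,
      if f 0 = i ∧ f (Fin.last n) = j then ∏ t : Fin n, A (f t.castSucc) (f t.succ) else 0 := by
  induction n generalizing j with
  | zero =>
    rw [pow_zero, Matrix.one_apply,
      ← (Equiv.funUnique (Fin 1) V).symm.sum_comp]
    simp only [Equiv.funUnique_symm_apply]
    by_cases h : i = j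
    · simp [h, Finset.sum_ite_eq']
    · rw [if_neg h]
      exact (Finset.sum_eq_zero (by rintro x -; rw [if_neg]; rintro ⟨rfl, rfl⟩; exact h rfl)).symm
  | succ n ih =>
    have lhs_eq : (A ^ (n+1)) i j
        = ∑ g : Fin (n+1) → V, (if g 0 = i then
            (∏ t : Fin n, A (g t.castSucc) (g t.succ)) * A (g (Fin.last n)) j else 0) := by
      rw [pow_succ, Matrix.mul_apply]
      simp only [ih, Finset.sum_mul]
      rw [Finset.sum_comm]
      refine Finset.sum_congr rfl fun g _ => ?_
      by_cases h0 : g 0 = i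
      · simp [h0, ite_mul]
      · simp [h0]
    rw [lhs_eq, ← (Fin.snocEquiv fun _ : Fin (n+2) => V).sum_comp, Fintype.sum_prod_type,
      Finset.sum_comm]
    refine Finset.sum_congr rfl fun g _ => ?_
    simp only [Fin.snocEquiv_apply]
    have hz : ∀ v : V, (Fin.snoc g v : Fin (n+2) → V) 0 = g 0 := fun v => by
      simpa using Fin.snoc_castSucc (α := fun _ : Fin (n+2) => V) (p := g) (x := v) (i := 0)
    by_cases h0 : g 0 = i
    · simp only [hz, Fin.snoc_last, h0, true_and, if_true, Fin.prod_univ_castSucc,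
        Fin.succ_castSucc, Fin.snoc_castSucc, Fin.succ_last, Fin.snoc_last]
      rw [Finset.sum_ite_eq' Finset.univ j
        (fun v => (∏ t : Fin n, A (g t.castSucc) (g t.succ)) * A (g (Fin.last n)) v)]
      simp
    · simp [hz, h0]

lemma snoc_succ_eq (m : ℕ) (g : Fin (m+1) → V) (t : Fin (m+1)) :
    (Fin.snoc g (g 0) : Fin (m+2) → V) t.succ = g (t + 1) := by
  rcases Nat.lt_or_ge (t.val + 1) (m + 1) with h | h
  · have h1 : t.succ = Fin.castSucc ⟨t.val + 1, h⟩ := by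
      apply Fin.ext; simp
    have h2 : t + 1 = ⟨t.val + 1, h⟩ := by
      apply Fin.ext
      simp [Fin.add_def, Fin.val_one']
      omega
    rw [h1, h2, Fin.snoc_castSucc]
  · have h3 : t.val + 1 = m + 1 := by have := t.isLt; omega
    have h1 : t.succ = Fin.last (m+1) := by apply Fin.ext; simp [h3]
    have h2 : t + 1 = 0 := by
      apply Fin.ext
      simp [Fin.add_def, Fin.val_one', h3]
    rw [h1, h2, Fin.snoc_last]

lemma trace_pow_eq_cyclic (A : Matrix V V ℝ) (m : ℕ) :
    (A ^ (m+1)).trace = ∑ g : Fin (m+1) → V, ∏ t : Fin (m+1), A (g t) (g (t + 1)) := by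
  rw [Matrix.trace]
  simp only [Matrix.diag_apply, pow_apply_walks]
  rw [Finset.sum_comm]
  have step1 : ∀ f : Fin (m+2) → V,
      (∑ i : V, if f 0 = i ∧ f (Fin.last (m+1)) = i
        then ∏ t : Fin (m+1), A (f t.castSucc) (f t.succ) else 0)
      = if f (Fin.last (m+1)) = f 0
        then ∏ t : Fin (m+1), A (f t.castSucc) (f t.succ) else 0 := by
    intro f
    simp only [ite_and]
    rw [Finset.sum_ite_eq]
    simp
  simp only [step1]
  rw [← (Fin.snocEquiv fun _ : Fin (m+2) => V).sum_comp, Fintype.sum_prod_type,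
    Finset.sum_comm]
  refine Finset.sum_congr rfl fun g _ => ?_
  simp only [Fin.snocEquiv_apply]
  have hz : ∀ v : V, (Fin.snoc g v : Fin (m+2) → V) 0 = g 0 := fun v => by
    simpa using Fin.snoc_castSucc (α := fun _ : Fin (m+2) => V) (p := g) (x := v) (i := 0)
  simp only [Fin.snoc_last, hz]
  rw [Finset.sum_ite_eq']
  simp only [Finset.mem_univ, if_true]
  refine Finset.prod_congr rfl fun t _ => ?_
  rw [Fin.snoc_castSucc, snoc_succ_eq]

lemma fin_add_one_val (m : ℕ) (t : Fin (m+1)) :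
    ((t + 1 : Fin (m+1))).val = (t.val + 1) % (m+1) := by
  rw [Fin.add_def]
  show (↑t + 1 % (m+1)) % (m+1) = (↑t + 1) % (m+1)
  rw [Nat.add_mod_mod]

lemma homCount_cyc_eq (H : V → V → Prop) [DecidableRel H] (hsym : ∀ a b, H a b → H b a)
    (m : ℕ) :
    (HomCount (cycAdj (m+1)) H : ℝ)
      = ∑ g : Fin (m+1) → V, ∏ t : Fin (m+1), adjMat H (g t) (g (t + 1)) := by
  have hcond : ∀ g : Fin (m+1) → V,
      (∀ a b, cycAdj (m+1) a b → H (g a) (g b)) ↔ ∀ t : Fin (m+1), H (g t) (g (t+1)) := by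
    intro g
    constructor
    · intro h t
      exact h t (t+1) (Or.inl (fin_add_one_val m t).symm)
    · intro h a b hab
      rcases hab with hab | hab
      · have hb : b = a + 1 := by
          apply Fin.ext; rw [fin_add_one_val, hab]
        exact hb ▸ h a
      · have ha : a = b + 1 := by
          apply Fin.ext; rw [fin_add_one_val, hab]
        exact hsym _ _ (ha ▸ h b)
  rw [HomCount, Fintype.card_subtype, Finset.card_filter]
  push_cast
  refine Finset.sum_congr rfl fun g _ => ?_
  simp only [adjMat]
  by_cases hg : ∀ t : Fin (m+1), H (g t) (g (t+1))
  · rw [if_pos ((hcond g).mpr hg)]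
    exact (Finset.prod_eq_one fun t _ => by rw [if_pos (hg t)]).symm
  · rw [if_neg (fun hc => hg ((hcond g).mp hc))]
    push_neg at hg
    obtain ⟨t, ht⟩ := hg
    exact (Finset.prod_eq_zero (Finset.mem_univ t) (by rw [if_neg ht])).symm

lemma conjPowAux (U D : Matrix V V ℝ) (hU : U * star U = 1) (hU' : star U * U = 1) (n : ℕ) :
    (U * D * star U) ^ n = U * D ^ n * star U := by
  induction n with
  | zero => simp [hU]
  | succ n ih =>
    rw [pow_succ, ih, pow_succ]
    simp only [Matrix.mul_assoc]
    rw [← Matrix.mul_assoc (star U) U, hU', Matrix.one_mul]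

lemma trace_pow_spec (A : Matrix V V ℝ) (hA : A.IsHermitian) (n : ℕ) :
    (A ^ n).trace = ∑ i : V, hA.eigenvalues i ^ n := by
  have hU' : star (hA.eigenvectorUnitary : Matrix V V ℝ) * hA.eigenvectorUnitary = 1 :=
    Unitary.coe_star_mul_self _
  have hU : (hA.eigenvectorUnitary : Matrix V V ℝ)
      * star (hA.eigenvectorUnitary : Matrix V V ℝ) = 1 :=
    Unitary.coe_mul_star_self _
  conv_lhs => rw [hA.spectral_theorem, Unitary.conjStarAlgAut_apply, conjPowAux _ _ hU hU']
  rw [Matrix.trace_mul_comm, ← Matrix.mul_assoc, hU', Matrix.one_mul,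
    Matrix.diagonal_pow, Matrix.trace_diagonal]
  simp

lemma adj_herm (H : V → V → Prop) [DecidableRel H] (hsym : ∀ a b, H a b → H b a) :
    (adjMat H).IsHermitian := by
  ext i j
  simp only [Matrix.conjTranspose_apply, adjMat, star_trivial]
  by_cases h : H i j
  · simp [h, hsym _ _ h]
  · have h' : ¬ H j i := fun hh => h (hsym _ _ hh)
    simp [h, h']

lemma sum_pow_ineq (a : V → ℝ) (ha : ∀ i, 0 ≤ a i) (m : ℕ) (hm : 0 < m) :
    (∑ i, a i ^ (m+1)) ^ m ≤ (∑ i, a i ^ m) ^ (m+1) := by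
  cases isEmpty_or_nonempty V with
  | inl h =>
    simp [Finset.univ_eq_empty, zero_pow hm.ne', zero_pow (Nat.succ_ne_zero m)]
  | inr h =>
    obtain ⟨i0, -, hmax⟩ := Finset.exists_max_image Finset.univ a
      ⟨Classical.arbitrary V, Finset.mem_univ _⟩
    have hT : 0 ≤ ∑ i, a i ^ m := Finset.sum_nonneg fun i _ => pow_nonneg (ha i) m
    have h1 : (∑ i, a i ^ (m+1)) ≤ (∑ i, a i ^ m) * a i0 := by
      refine le_trans (Finset.sum_le_sum fun i (_ : i ∈ Finset.univ) => ?_)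
        (Finset.sum_mul ..).ge
      rw [pow_succ]
      exact mul_le_mul_of_nonneg_left (hmax i (Finset.mem_univ i)) (pow_nonneg (ha i) m)
    have h2 : a i0 ^ m ≤ ∑ i, a i ^ m :=
      Finset.single_le_sum (fun i _ => pow_nonneg (ha i) m) (Finset.mem_univ i0)
    calc (∑ i, a i ^ (m+1)) ^ m
        ≤ ((∑ i, a i ^ m) * a i0) ^ m :=
          pow_le_pow_left₀ (Finset.sum_nonneg fun i _ => pow_nonneg (ha i) (m+1)) h1 m
      _ = (∑ i, a i ^ m) ^ m * a i0 ^ m := mul_pow _ _ m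
      _ ≤ (∑ i, a i ^ m) ^ m * (∑ i, a i ^ m) :=
          mul_le_mul_of_nonneg_left h2 (pow_nonneg hT m)
      _ = (∑ i, a i ^ m) ^ (m+1) := (pow_succ _ m).symm

end Aux

/-- for odd `k ≥ 5`, `hom(C_k,H)^{1/k} ≤ hom(C_{k-1},H)^{1/(k-1)}`. -/
theorem cycle_hom_odd_step {V : Type*} [Fintype V] [DecidableEq V]
    (H : V → V → Prop) [DecidableRel H] (hsym : ∀ a b, H a b → H b a)
    (hiso : ∀ v, ∃ w, H v w)
    (k : ℕ) (hk : 5 ≤ k) (hko : Odd k) :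
    (HomCount (cycAdj k) H : ℝ) ^ ((k : ℝ)⁻¹) ≤
      (HomCount (cycAdj (k - 1)) H : ℝ) ^ (((k : ℝ) - 1)⁻¹) := by
  obtain ⟨n, rfl⟩ : ∃ n, k = n + 2 := ⟨k - 2, by omega⟩
  have hme : Even (n + 1) := by
    rcases hko with ⟨j, hj⟩; exact ⟨j, by omega⟩
  have hA := adj_herm H hsym
  set μ := hA.eigenvalues with hμ
  have e1 : (HomCount (cycAdj (n+2)) H : ℝ) = ∑ i, μ i ^ (n+2) := by
    rw [show n + 2 = (n+1) + 1 from rfl, homCount_cyc_eq H hsym (n+1),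
      ← trace_pow_eq_cyclic, trace_pow_spec _ hA]
  have e2 : (HomCount (cycAdj (n+2-1)) H : ℝ) = ∑ i, μ i ^ (n+1) := by
    rw [show n + 2 - 1 = n + 1 from rfl, homCount_cyc_eq H hsym n,
      ← trace_pow_eq_cyclic, trace_pow_spec _ hA]
  set S := (HomCount (cycAdj (n+2)) H : ℝ) with hSdef
  set T := (HomCount (cycAdj (n+2-1)) H : ℝ) with hTdef
  have hS0 : (0:ℝ) ≤ S := Nat.cast_nonneg _
  have hT0 : (0:ℝ) ≤ T := Nat.cast_nonneg _
  have key : S ^ (n+1) ≤ T ^ (n+2) := by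
    have hS : S ≤ ∑ i, |μ i| ^ (n+2) := by
      rw [e1]
      exact Finset.sum_le_sum fun i _ => (le_abs_self _).trans (abs_pow (μ i) (n+2)).le
    have hTeq : T = ∑ i, |μ i| ^ (n+1) := by
      rw [e2]
      exact Finset.sum_congr rfl fun i _ => (hme.pow_abs (μ i)).symm
    calc S ^ (n+1) ≤ (∑ i, |μ i| ^ (n+2)) ^ (n+1) := pow_le_pow_left₀ hS0 hS _
      _ ≤ (∑ i, |μ i| ^ (n+1)) ^ (n+2) :=
          sum_pow_ineq (fun i => |μ i|) (fun i => abs_nonneg _) (n+1) (Nat.succ_pos n)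
      _ = T ^ (n+2) := by rw [hTeq]
  have hn1 : (0:ℝ) < (n:ℝ) + 1 := by positivity
  have hn2 : (0:ℝ) < (n:ℝ) + 2 := by positivity
  have hc1 : ((((n:ℕ)+2 : ℕ)):ℝ)⁻¹ = ((n:ℝ)+1) * ((((n:ℝ)+2) * ((n:ℝ)+1))⁻¹) := by
    push_cast
    field_simp
  have hc2 : (((((n:ℕ)+2 : ℕ)):ℝ) - 1)⁻¹ = ((n:ℝ)+2) * ((((n:ℝ)+2) * ((n:ℝ)+1))⁻¹) := by
    push_cast
    rw [show (n:ℝ) + 2 - 1 = (n:ℝ) + 1 by ring]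
    field_simp
  rw [hc1, hc2, Real.rpow_mul hS0, Real.rpow_mul hT0]
  refine Real.rpow_le_rpow (by positivity) ?_ (by positivity)
  rw [show ((n:ℝ)+1) = (((n+1:ℕ)):ℝ) by push_cast; ring, Real.rpow_natCast,
    show ((n:ℝ)+2) = (((n+2:ℕ)):ℝ) by push_cast; ring, Real.rpow_natCast]
  exact key
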